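/- In a connected chordal bipartite graph G with bipartition classes A and B, if M is an induced subgraph on a set of vertices containing at least one vertex of each class such that M is connected and the vertex set of M dominates all of G, then for every edge e₀ = {v₀,h₀} of G (v₀ ∈ A, h₀ ∈ B) there exist an edge e of M such that either e ∩ e₀ ≠ ∅ or e ∪ e₀ induces a 4-cycle in G. -/

import Mathlib

set_option maxHeartbeats 1000000

/-- Every cycle of length at least 6 has a chord. -/
def ChordCond {V : Type*} (G : SimpleGraph V) : Prop :=
  ∀ (v : V) (c : G.Walk v v), c.IsCycle → 6 ≤ c.length →
    ∃ a b, a ∈ c.support ∧ b ∈ c.support ∧ G.Adj a b ∧ s(a, b) ∉ c.edges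

/-- The four vertices `v₁,h₁,v₂,h₂` induce a 4-cycle. -/
def Induces4Cycle {V : Type*} (G : SimpleGraph V) (v₁ h₁ v₂ h₂ : V) : Prop :=
  v₁ ≠ v₂ ∧ h₁ ≠ h₂ ∧ G.Adj v₁ h₁ ∧ G.Adj v₁ h₂ ∧ G.Adj v₂ h₁ ∧ G.Adj v₂ h₂

/-- Two edges `{v₁,h₁}` and `{v₂,h₂}` of a bipartite graph have r-vision of each
other: they intersect, or their union induces a 4-cycle. -/
def RVision {V : Type*} (G : SimpleGraph V) (v₁ h₁ v₂ h₂ : V) : Prop :=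
  v₁ = v₂ ∨ h₁ = h₂ ∨ Induces4Cycle G v₁ h₁ v₂ h₂

open SimpleGraph

/-- Edge between consecutive vertices of a walk is an edge of the walk. -/
lemma aux_getVert_edge {V : Type*} {G : SimpleGraph V} {a b : V} (p : G.Walk a b) :
    ∀ i, i < p.length → s(p.getVert i, p.getVert (i + 1)) ∈ p.edges := by
  induction p with
  | nil => intro i hi; simp at hi
  | cons h q ih =>
    intro i hi
    cases i with
    | zero =>
      simp only [Walk.getVert_zero, Walk.getVert_cons_succ, Walk.edges_cons]
      exact List.mem_cons_self
    | succ n =>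
      have hn : n < q.length := by
        simp only [Walk.length_cons] at hi; omega
      simp only [Walk.getVert_cons_succ, Walk.edges_cons]
      exact List.mem_cons_of_mem _ (ih n hn)

lemma aux_getVert_takeUntil {V : Type*} [DecidableEq V] {G : SimpleGraph V} {x y u : V}
    (p : G.Walk x y) (h : u ∈ p.support) :
    p.getVert (p.takeUntil u h).length = u := by
  have h1 := congrArg (fun w : G.Walk x y => w.getVert (p.takeUntil u h).length)
    (Walk.take_spec p h)
  simp only [Walk.getVert_append, lt_self_iff_false, if_false, Nat.sub_self,
    Walk.getVert_zero] at h1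
  exact h1.symm

lemma aux_length_take_drop {V : Type*} [DecidableEq V] {G : SimpleGraph V} {x y u : V}
    (p : G.Walk x y) (h : u ∈ p.support) :
    (p.takeUntil u h).length + (p.dropUntil u h).length = p.length := by
  conv_rhs => rw [← Walk.take_spec p h]
  rw [Walk.length_append]

/-- Parity of a walk in a bipartite-like situation. -/
lemma aux_parity {V W : Type*} {G' : SimpleGraph W} (A : Set V) (f : W → V)
    (hflip : ∀ a b, G'.Adj a b → (f a ∈ A ↔ ¬ f b ∈ A)) :
    ∀ {x y : W} (p : G'.Walk x y), ((f x ∈ A) ↔ (f y ∈ A)) ↔ Even p.length := by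
  intro x y p
  induction p with
  | nil => simp
  | cons h q ih =>
    have := hflip _ _ h
    rw [Walk.length_cons, Nat.even_add_one, ← ih]
    tauto

lemma key_lemma {V : Type*} (G : SimpleGraph V) (A B : Set V)
    (hpart : ∀ v, (v ∈ A ∧ v ∉ B) ∨ (v ∈ B ∧ v ∉ A))
    (hbip : ∀ x y, G.Adj x y → (x ∈ A ∧ y ∈ B) ∨ (x ∈ B ∧ y ∈ A))
    (hchord : ChordCond G)
    (M : Set V) (v₀ h₀ : V) (hv₀ : v₀ ∈ A) (hh₀ : h₀ ∈ B) (he₀ : G.Adj v₀ h₀)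
    (hv₀M : v₀ ∉ M) (hh₀M : h₀ ∉ M) :
    ∀ n (x y : ↥M) (p : (G.induce M).Walk x y), p.IsPath → p.length = n →
      G.Adj v₀ ↑x → G.Adj ↑y h₀ →
      ∃ v h, v ∈ M ∧ h ∈ M ∧ v ∈ A ∧ h ∈ B ∧ G.Adj v h ∧ RVision G v h v₀ h₀ := by
  classical
  have hflip : ∀ a b : ↥M, (G.induce M).Adj a b → ((a : V) ∈ A ↔ ¬ (b : V) ∈ A) := by
    intro a b hab
    have hab' : G.Adj ↑a ↑b := hab
    rcases hbip _ _ hab' with ⟨h1, h2⟩ | ⟨h1, h2⟩ <;>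
      rcases hpart (↑a : V) with ⟨g1, g2⟩ | ⟨g1, g2⟩ <;>
      rcases hpart (↑b : V) with ⟨k1, k2⟩ | ⟨k1, k2⟩ <;> tauto
  intro n
  induction n using Nat.strong_induction_on with
  | _ n ih =>
    intro x y p hp hlen hx hy
    -- basic class facts
    have hxB : (↑x : V) ∈ B := by
      rcases hbip _ _ hx with ⟨h1, h2⟩ | ⟨h1, h2⟩
      · exact h2
      · rcases hpart v₀ with ⟨g1, g2⟩ | ⟨g1, g2⟩ <;> tauto
    have hxA : (↑x : V) ∉ A := by
      rcases hpart (↑x : V) with ⟨g1, g2⟩ | ⟨g1, g2⟩ <;> tauto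
    have hyA : (↑y : V) ∈ A := by
      rcases hbip _ _ hy with ⟨h1, h2⟩ | ⟨h1, h2⟩
      · rcases hpart h₀ with ⟨g1, g2⟩ | ⟨g1, g2⟩ <;> tauto
      · rcases hpart h₀ with ⟨g1, g2⟩ | ⟨g1, g2⟩ <;> tauto
    have hparity : ((↑x : V) ∈ A ↔ (↑y : V) ∈ A) ↔ Even p.length :=
      aux_parity A (fun u : ↥M => (u : V)) hflip p
    have hodd : ¬ Even n := by
      rw [← hlen]
      intro hE
      exact hxA (hparity.mpr (by rw [hlen]; rw [hlen] at hE; exact hE) |>.mpr hyA)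
    have hn1 : 1 ≤ n := by
      rcases Nat.eq_zero_or_pos n with h0 | h1
      · exact absurd (h0 ▸ (Even.zero)) (h0 ▸ hodd)
      · exact h1
    rcases eq_or_lt_of_le hn1 with h1 | h2
    · -- n = 1 : p is a single edge
      have hadj : (G.induce M).Adj x y := by
        have := p.adj_getVert_succ (i := 0) (by omega)
        rwa [Walk.getVert_zero, show (0 : ℕ) + 1 = p.length by omega,
          Walk.getVert_length] at this
      have hadj' : G.Adj ↑x ↑y := hadj
      refine ⟨↑y, ↑x, y.2, x.2, hyA, hxB, hadj'.symm, Or.inr (Or.inr ?_)⟩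
      exact ⟨fun hc => hv₀M (hc ▸ y.2), fun hc => hh₀M (hc ▸ x.2),
        hadj'.symm, hy, hx, he₀⟩
    · -- n ≥ 3
      have hn3 : 3 ≤ n := by
        rcases Nat.even_or_odd n with hE | hO
        · exact absurd hE hodd
        · rcases hO with ⟨k, hk⟩; omega
      -- n ≥ 3: build the cycle and use the chord condition
      have hfun : ⇑(SimpleGraph.Embedding.induce (G := G) M).toHom
          = (Subtype.val : ↥M → V) := rfl
      set F : G.Walk ↑x ↑y := p.map (SimpleGraph.Embedding.induce (G := G) M).toHom with hF
      have hFsupp : F.support = p.support.map Subtype.val := by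
        rw [hF]; exact Walk.support_map _ _
      have hFedges : F.edges = p.edges.map (Sym2.map Subtype.val) := by
        rw [hF]; exact Walk.edges_map _ _
      have hFlen : F.length = p.length := by rw [hF]; exact Walk.length_map _ _
      set q : G.Walk ↑x v₀ := F.append (Walk.cons hy (Walk.cons he₀.symm Walk.nil)) with hq
      have hqsupp : q.support = p.support.map Subtype.val ++ [h₀, v₀] := by
        rw [hq, Walk.support_append, hFsupp]
        simp
      have hqedges : q.edges = F.edges ++ [s((↑y : V), h₀), s(h₀, v₀)] := by
        rw [hq, Walk.edges_append]
        simp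
      have hMsupp : ∀ w ∈ p.support.map (Subtype.val : ↥M → V), w ∈ M := by
        intro w hw
        rcases List.mem_map.mp hw with ⟨u, _, rfl⟩
        exact u.2
      have hqpath : q.IsPath := by
        rw [Walk.isPath_def, hqsupp]
        refine List.Nodup.append
          (List.Nodup.map Subtype.val_injective hp.support_nodup) (by simp [he₀.ne']) ?_
        intro a ha hb
        have haM := hMsupp a ha
        simp only [List.mem_cons, List.mem_singleton, List.not_mem_nil, or_false] at hb
        rcases hb with rfl | rfl
        · exact hh₀M haM
        · exact hv₀M haM
      have hnoedge : s(v₀, (↑x : V)) ∉ q.edges := by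
        rw [hqedges]
        intro hmem
        rcases List.mem_append.mp hmem with hmem | hmem
        · have hvs : v₀ ∈ F.support := Walk.fst_mem_support_of_mem_edges F hmem
          rw [hFsupp] at hvs
          exact hv₀M (hMsupp _ hvs)
        · simp only [List.mem_cons, List.mem_singleton, List.not_mem_nil, or_false] at hmem
          rcases hmem with hmem | hmem
          · rw [Sym2.eq_iff] at hmem
            rcases hmem with ⟨h1, h2⟩ | ⟨h1, h2⟩
            · exact hv₀M (h1 ▸ y.2)
            · exact he₀.ne h1
          · rw [Sym2.eq_iff] at hmem
            rcases hmem with ⟨h1, h2⟩ | ⟨h1, h2⟩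
            · exact he₀.ne h1
            · exact hh₀M (h2 ▸ x.2)
      set c : G.Walk v₀ v₀ := Walk.cons hx q with hc
      have hcyc : c.IsCycle := (Walk.cons_isCycle_iff q hx).mpr ⟨hqpath, hnoedge⟩
      have hclen : c.length = n + 3 := by
        rw [hc]
        simp only [Walk.length_cons, hq, Walk.length_append, Walk.length_nil, hFlen, hlen]
      have hcsupp : c.support = v₀ :: (p.support.map Subtype.val ++ [h₀, v₀]) := by
        rw [hc, Walk.support_cons, hqsupp]
      have hcedges : c.edges = s(v₀, (↑x : V)) :: (F.edges ++ [s((↑y : V), h₀), s(h₀, v₀)]) := by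
        rw [hc, Walk.edges_cons, hqedges]
      obtain ⟨a, b, hac, hbc, hab, hnot⟩ := hchord v₀ c hcyc (by omega)
      have hchar : ∀ w, w ∈ c.support → w = v₀ ∨ w = h₀ ∨ ∃ u : ↥M, u ∈ p.support ∧ w = ↑u := by
        intro w hw
        rw [hcsupp] at hw
        simp only [List.mem_cons, List.mem_append, List.mem_map, List.mem_singleton,
          List.not_mem_nil, or_false] at hw
        rcases hw with rfl | ⟨u, hu, rfl⟩ | rfl | rfl
        · exact Or.inl rfl
        · exact Or.inr (Or.inr ⟨u, hu, rfl⟩)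
        · exact Or.inr (Or.inl rfl)
        · exact Or.inl rfl
      have Hv : ∀ m : ↥M, m ∈ p.support → G.Adj v₀ ↑m → s(v₀, (m : V)) ∉ c.edges →
          ∃ v h, v ∈ M ∧ h ∈ M ∧ v ∈ A ∧ h ∈ B ∧ G.Adj v h ∧ RVision G v h v₀ h₀ := by
        intro m hm hadj hnem
        have hmx : m ≠ x := by
          rintro rfl
          exact hnem (by rw [hcedges]; exact List.mem_cons_self)
        have htm : 1 ≤ (p.takeUntil m hm).length := by
          by_contra hcon
          push_neg at hcon
          exact hmx (Walk.eq_of_length_eq_zero (p := p.takeUntil m hm) (by omega)).symm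
        have hsum := aux_length_take_drop p hm
        refine ih (p.dropUntil m hm).length ?_ m y (p.dropUntil m hm)
          (hp.dropUntil hm) rfl hadj hy
        omega
      have Hh : ∀ m : ↥M, m ∈ p.support → G.Adj (↑m) h₀ → s((m : V), h₀) ∉ c.edges →
          ∃ v h, v ∈ M ∧ h ∈ M ∧ v ∈ A ∧ h ∈ B ∧ G.Adj v h ∧ RVision G v h v₀ h₀ := by
        intro m hm hadj hnem
        have hmy : m ≠ y := by
          rintro rfl
          exact hnem (by rw [hcedges]; simp)
        have hdm : 1 ≤ (p.dropUntil m hm).length := by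
          by_contra hcon
          push_neg at hcon
          exact hmy (Walk.eq_of_length_eq_zero (p := p.dropUntil m hm) (by omega))
        have hsum := aux_length_take_drop p hm
        refine ih (p.takeUntil m hm).length ?_ x m (p.takeUntil m hm)
          (hp.takeUntil hm) rfl hx hadj
        omega
      have HMM : ∀ u m : ↥M, u ∈ p.support → m ∈ p.support → G.Adj ↑u ↑m →
          s((u : V), (m : V)) ∉ c.edges →
          ∃ v h, v ∈ M ∧ h ∈ M ∧ v ∈ A ∧ h ∈ B ∧ G.Adj v h ∧ RVision G v h v₀ h₀ := by
        intro u m hu hm hadj hnem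
        have hadj' : (G.induce M).Adj u m := hadj
        have hpe : s(u, m) ∉ p.edges := by
          intro hmem
          apply hnem
          rw [hcedges]
          refine List.mem_cons_of_mem _ (List.mem_append_left _ ?_)
          rw [hFedges]
          exact List.mem_map.mpr ⟨s(u, m), hmem, Sym2.map_pair_eq _ _ _⟩
        have hpu := aux_parity A (fun u : ↥M => (u : V)) hflip (p.takeUntil u hu)
        have hpm := aux_parity A (fun u : ↥M => (u : V)) hflip (p.takeUntil m hm)
        have hdiff := hflip u m hadj'
        have hne' : ¬ (Even (p.takeUntil u hu).length ↔ Even (p.takeUntil m hm).length) := by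
          rw [← hpu, ← hpm]; tauto
        have hsu := aux_length_take_drop p hu
        have hsm := aux_length_take_drop p hm
        have htne : (p.takeUntil u hu).length ≠ (p.takeUntil m hm).length := by
          intro hEq
          exact hne' (by rw [hEq])
        have hgu := aux_getVert_takeUntil p hu
        have hgm := aux_getVert_takeUntil p hm
        have htul : (p.takeUntil u hu).length ≤ p.length := Walk.length_takeUntil_le p hu
        have html : (p.takeUntil m hm).length ≤ p.length := Walk.length_takeUntil_le p hm
        rcases show (p.takeUntil m hm).length = (p.takeUntil u hu).length + 1 ∨
            (p.takeUntil u hu).length = (p.takeUntil m hm).length + 1 ∨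
            (p.takeUntil u hu).length + 2 ≤ (p.takeUntil m hm).length ∨
            (p.takeUntil m hm).length + 2 ≤ (p.takeUntil u hu).length by omega
          with hcase | hcase | hcase | hcase
        · exfalso
          apply hpe
          have hEd := aux_getVert_edge p (p.takeUntil u hu).length (by omega)
          rwa [hgu, ← hcase, hgm] at hEd
        · exfalso
          apply hpe
          have hEd := aux_getVert_edge p (p.takeUntil m hm).length (by omega)
          rw [hgm, ← hcase, hgu] at hEd
          rwa [Sym2.eq_swap] at hEd
        · set w : (G.induce M).Walk x y :=
            (p.takeUntil u hu).append (Walk.cons hadj' (p.dropUntil m hm)) with hwdef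
          have hwlen : w.length = (p.takeUntil u hu).length + 1 + (p.dropUntil m hm).length := by
            rw [hwdef, Walk.length_append, Walk.length_cons]; omega
          have hblt : w.bypass.length < n := by
            have hble := Walk.length_bypass_le w
            omega
          exact ih w.bypass.length hblt x y w.bypass w.bypass_isPath rfl hx hy
        · set w : (G.induce M).Walk x y :=
            (p.takeUntil m hm).append (Walk.cons hadj'.symm (p.dropUntil u hu)) with hwdef
          have hwlen : w.length = (p.takeUntil m hm).length + 1 + (p.dropUntil u hu).length := by
            rw [hwdef, Walk.length_append, Walk.length_cons]; omega
          have hblt : w.bypass.length < n := by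
            have hble := Walk.length_bypass_le w
            omega
          exact ih w.bypass.length hblt x y w.bypass w.bypass_isPath rfl hx hy
      rcases hchar a hac with rfl | rfl | ⟨u, hu, rfl⟩
      · rcases hchar b hbc with rfl | rfl | ⟨m, hm, rfl⟩
        · exact absurd rfl hab.ne
        · exact absurd (by rw [hcedges]; simp [Sym2.eq_swap]) hnot
        · exact Hv m hm hab hnot
      · rcases hchar b hbc with rfl | rfl | ⟨m, hm, rfl⟩
        · exact absurd (by rw [hcedges]; simp) hnot
        · exact absurd rfl hab.ne
        · exact Hh m hm hab.symm (by rwa [Sym2.eq_swap] at hnot)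
      · rcases hchar b hbc with rfl | rfl | ⟨m, hm, rfl⟩
        · exact Hv u hu hab.symm (by rwa [Sym2.eq_swap] at hnot)
        · exact Hh u hu hab hnot
        · exact HMM u m hu hm hab hnot

theorem connected_dominating_induced_subgraph_rvision {V : Type*} (G : SimpleGraph V)
    (A B : Set V)
    (hpart : ∀ v, (v ∈ A ∧ v ∉ B) ∨ (v ∈ B ∧ v ∉ A))
    (hbip : ∀ x y, G.Adj x y → (x ∈ A ∧ y ∈ B) ∨ (x ∈ B ∧ y ∈ A))
    (hconn : G.Connected) (hchord : ChordCond G)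
    (M : Set V) (hMA : (M ∩ A).Nonempty) (hMB : (M ∩ B).Nonempty)
    (hMconn : (G.induce M).Connected)
    (hdom : ∀ v : V, v ∈ M ∨ ∃ u ∈ M, G.Adj u v)
    (v₀ h₀ : V) (hv₀ : v₀ ∈ A) (hh₀ : h₀ ∈ B) (he₀ : G.Adj v₀ h₀) :
    ∃ v h, v ∈ M ∧ h ∈ M ∧ v ∈ A ∧ h ∈ B ∧ G.Adj v h ∧ RVision G v h v₀ h₀ := by
  classical
  have hnbr : ∀ (a b : ↥M), a ≠ b → ((G.induce M).Reachable a b) →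
      ∃ u : ↥M, (G.induce M).Adj a u := by
    intro a b hab h
    obtain ⟨w⟩ := h
    cases w with
    | nil => exact absurd rfl hab
    | cons h' w' => exact ⟨_, h'⟩
  by_cases hvM : v₀ ∈ M
  · obtain ⟨z, hzM, hzB⟩ := hMB
    have hzv : (⟨v₀, hvM⟩ : ↥M) ≠ ⟨z, hzM⟩ := by
      intro hEq
      have hvz : v₀ = z := congrArg Subtype.val hEq
      rcases hpart v₀ with ⟨g1, g2⟩ | ⟨g1, g2⟩
      · exact g2 (hvz ▸ hzB)
      · exact g2 hv₀
    obtain ⟨u, hu⟩ := hnbr _ _ hzv (hMconn.preconnected ⟨v₀, hvM⟩ ⟨z, hzM⟩)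
    have hu' : G.Adj v₀ ↑u := hu
    have huB : (↑u : V) ∈ B := by
      rcases hbip _ _ hu' with ⟨h1, h2⟩ | ⟨h1, h2⟩
      · exact h2
      · rcases hpart v₀ with ⟨g1, g2⟩ | ⟨g1, g2⟩ <;> tauto
    exact ⟨v₀, ↑u, hvM, u.2, hv₀, huB, hu', Or.inl rfl⟩
  · by_cases hhM : h₀ ∈ M
    · obtain ⟨z, hzM, hzA⟩ := hMA
      have hzv : (⟨h₀, hhM⟩ : ↥M) ≠ ⟨z, hzM⟩ := by
        intro hEq
        have hhz : h₀ = z := congrArg Subtype.val hEq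
        rcases hpart h₀ with ⟨g1, g2⟩ | ⟨g1, g2⟩
        · exact g2 hh₀
        · exact g2 (hhz ▸ hzA)
      obtain ⟨u, hu⟩ := hnbr _ _ hzv (hMconn.preconnected ⟨h₀, hhM⟩ ⟨z, hzM⟩)
      have hu' : G.Adj h₀ ↑u := hu
      have huA : (↑u : V) ∈ A := by
        rcases hbip _ _ hu' with ⟨h1, h2⟩ | ⟨h1, h2⟩
        · rcases hpart h₀ with ⟨g1, g2⟩ | ⟨g1, g2⟩ <;> tauto
        · exact h2
      exact ⟨↑u, h₀, u.2, hhM, huA, hh₀, hu'.symm, Or.inr (Or.inl rfl)⟩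
    · rcases hdom v₀ with hvM' | ⟨ux, huxM, hux⟩
      · exact absurd hvM' hvM
      rcases hdom h₀ with hhM' | ⟨uy, huyM, huy⟩
      · exact absurd hhM' hhM
      obtain ⟨w⟩ := hMconn.preconnected ⟨ux, huxM⟩ ⟨uy, huyM⟩
      exact key_lemma G A B hpart hbip hchord M v₀ h₀ hv₀ hh₀ he₀ hvM hhM
        w.bypass.length ⟨ux, huxM⟩ ⟨uy, huyM⟩ w.bypass w.bypass_isPath rfl
        hux.symm huy
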